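/- (Proposition 4, continuous-time BIBO stability of the operator 𝓗.) Let q be a positive integer, φ : [0,∞) → ℝ^q continuous, γ_g : [0,∞) → ℝ continuous with γ_g(t) > 0 and ∫₀^∞ γ_g(t) dt < ∞, and d : [0,∞) → ℝ continuous and bounded. Let x_d : [0,∞) → ℝ^q be differentiable with x_d'(t) = −γ_g(t)·φ(t)φ(t)ᵀ·x_d(t) + γ_g(t)·φ(t)·d(t). Then x_d is bounded; in fact |x_d(t)|² ≤ |x_d(0)|² + (sup_{s≥0} |d(s)|)²·∫₀^t γ_g(s) ds for all t ≥ 0, and along trajectories V(t) := |x_d(t)|² satisfies V'(t) ≤ −γ_g(t)|φ(t)ᵀx_d(t)|² + γ_g(t)|d(t)|². -/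

import Mathlib

open Matrix
open MeasureTheory intervalIntegral Topology

/-- Proposition 4 (continuous time): BIBO stability of the operator `𝓗` when
`∫₀^∞ γ_g < ∞` and the disturbance `d` is bounded. -/
theorem bibo_stability_continuous
    (q : ℕ) (hq : 0 < q) (φ : ℝ → Fin q → ℝ) (hφcont : ContinuousOn φ (Set.Ici 0))
    (γg : ℝ → ℝ) (hγgcont : ContinuousOn γg (Set.Ici 0))
    (hγgpos : ∀ t ≥ (0 : ℝ), 0 < γg t)
    (hγgint : MeasureTheory.IntegrableOn γg (Set.Ici 0))
    (d : ℝ → ℝ) (hdcont : ContinuousOn d (Set.Ici 0))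
    (hdbdd : ∃ B : ℝ, ∀ t ≥ (0 : ℝ), |d t| ≤ B)
    (xd : ℝ → Fin q → ℝ)
    (hxd : ∀ t ≥ (0 : ℝ), HasDerivAt xd
      (-(γg t) • (Matrix.vecMulVec (φ t) (φ t)).mulVec (xd t) + (γg t * d t) • φ t) t) :
    (∃ B : ℝ, ∀ t ≥ (0 : ℝ), Real.sqrt (xd t ⬝ᵥ xd t) ≤ B) ∧
    (∀ t ≥ (0 : ℝ), xd t ⬝ᵥ xd t
      ≤ xd 0 ⬝ᵥ xd 0 + (sSup ((fun s => |d s|) '' Set.Ici 0)) ^ 2 * ∫ s in (0 : ℝ)..t, γg s) ∧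
    (∀ t ≥ (0 : ℝ), ∀ v' : ℝ, HasDerivAt (fun s => xd s ⬝ᵥ xd s) v' t →
      v' ≤ -(γg t) * (φ t ⬝ᵥ xd t) ^ 2 + γg t * |d t| ^ 2) := by
  classical
  set M : ℝ := sSup ((fun s => |d s|) '' Set.Ici 0) with hMdef
  obtain ⟨B, hB⟩ := hdbdd
  have hMbdd : BddAbove ((fun s => |d s|) '' Set.Ici 0) := by
    refine ⟨B, ?_⟩; rintro _ ⟨s, hs, rfl⟩; exact hB s hs
  have hdM : ∀ t ≥ (0 : ℝ), |d t| ≤ M := fun t ht => le_csSup hMbdd ⟨t, ht, rfl⟩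
  have hM0 : 0 ≤ M := le_trans (abs_nonneg _) (hdM 0 le_rfl)
  -- component derivatives
  have hcomp : ∀ t ≥ (0 : ℝ), ∀ i : Fin q, HasDerivAt (fun s => xd s i)
      ((-(γg t) • (Matrix.vecMulVec (φ t) (φ t)).mulVec (xd t) + (γg t * d t) • φ t) i) t := by
    intro t ht i
    have h := (hxd t ht).hasFDerivAt
    have h2 := (ContinuousLinearMap.proj (R := ℝ) (φ := fun _ : Fin q => ℝ) i).hasFDerivAt.comp t h
    exact hasDerivAt_pi.1 (hxd t ht) i
  -- the key derivative of V
  have hmv : ∀ t, (Matrix.vecMulVec (φ t) (φ t)).mulVec (xd t) = (φ t ⬝ᵥ xd t) • (φ t) := by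
    intro t; funext i
    simp only [Matrix.mulVec, Matrix.vecMulVec, dotProduct, Pi.smul_apply, smul_eq_mul,
      Matrix.of_apply, Finset.sum_mul]
    exact Finset.sum_congr rfl fun j _ => by ring
  have hV : ∀ t ≥ (0 : ℝ), HasDerivAt (fun s => xd s ⬝ᵥ xd s)
      (2 * (-(γg t) * (φ t ⬝ᵥ xd t) * (φ t ⬝ᵥ xd t) + (γg t * d t) * (φ t ⬝ᵥ xd t))) t := by
    intro t ht
    have h : HasDerivAt (fun s => ∑ i, xd s i * xd s i)
        (∑ i, ((-(γg t) • (Matrix.vecMulVec (φ t) (φ t)).mulVec (xd t) + (γg t * d t) • φ t) i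
          * xd t i + xd t i * (-(γg t) • (Matrix.vecMulVec (φ t) (φ t)).mulVec (xd t)
          + (γg t * d t) • φ t) i)) t :=
      HasDerivAt.fun_sum fun i _ => (hcomp t ht i).mul (hcomp t ht i)
    have heq : (∑ i, ((-(γg t) • (Matrix.vecMulVec (φ t) (φ t)).mulVec (xd t) + (γg t * d t) • φ t) i
          * xd t i + xd t i * (-(γg t) • (Matrix.vecMulVec (φ t) (φ t)).mulVec (xd t)
          + (γg t * d t) • φ t) i))
        = 2 * (-(γg t) * (φ t ⬝ᵥ xd t) * (φ t ⬝ᵥ xd t) + (γg t * d t) * (φ t ⬝ᵥ xd t)) := by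
      have hterm : ∀ i : Fin q, ((-(γg t) • (Matrix.vecMulVec (φ t) (φ t)).mulVec (xd t)
            + (γg t * d t) • φ t) i * xd t i + xd t i
            * (-(γg t) • (Matrix.vecMulVec (φ t) (φ t)).mulVec (xd t) + (γg t * d t) • φ t) i)
          = (2 * (-(γg t) * (φ t ⬝ᵥ xd t) + γg t * d t)) * (φ t i * xd t i) := by
        intro i
        simp only [hmv, Pi.add_apply, Pi.smul_apply, smul_eq_mul]
        ring
      rw [Finset.sum_congr rfl fun i _ => hterm i, ← Finset.mul_sum]
      have hsum : ∑ i : Fin q, φ t i * xd t i = φ t ⬝ᵥ xd t := rfl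
      rw [hsum]; ring
    rw [heq] at h
    simpa [dotProduct] using h
  -- derivative bound
  have hbound : ∀ t ≥ (0 : ℝ),
      2 * (-(γg t) * (φ t ⬝ᵥ xd t) * (φ t ⬝ᵥ xd t) + (γg t * d t) * (φ t ⬝ᵥ xd t))
        ≤ -(γg t) * (φ t ⬝ᵥ xd t) ^ 2 + γg t * |d t| ^ 2 := by
    intro t ht
    have hγ := hγgpos t ht
    have hsq := sq_nonneg (φ t ⬝ᵥ xd t - d t)
    have : |d t| ^ 2 = d t ^ 2 := sq_abs _
    nlinarith [mul_nonneg hγ.le hsq]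
  -- third conclusion
  have third : ∀ t ≥ (0 : ℝ), ∀ v' : ℝ, HasDerivAt (fun s => xd s ⬝ᵥ xd s) v' t →
      v' ≤ -(γg t) * (φ t ⬝ᵥ xd t) ^ 2 + γg t * |d t| ^ 2 := by
    intro t ht v' hv'
    have := hv'.unique (hV t ht)
    rw [this]; exact hbound t ht
  -- second conclusion: Gronwall
  have second : ∀ t ≥ (0 : ℝ), xd t ⬝ᵥ xd t
      ≤ xd 0 ⬝ᵥ xd 0 + M ^ 2 * ∫ s in (0 : ℝ)..t, γg s := by
    intro T hT
    rcases eq_or_lt_of_le hT with rfl | hT'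
    · simp
    set F : ℝ → ℝ := fun t => ∫ s in (0 : ℝ)..t, γg s with hF
    set W : ℝ → ℝ := fun t => xd t ⬝ᵥ xd t - M ^ 2 * F t with hW
    have hIcc : Set.uIcc (0 : ℝ) T = Set.Icc 0 T := Set.uIcc_of_le hT
    have hint : IntegrableOn γg (Set.uIcc 0 T) := by
      rw [hIcc]; exact hγgint.mono_set (Set.Icc_subset_Ici_self)
    have hFcont : ContinuousOn F (Set.Icc 0 T) := by
      rw [← hIcc]; exact intervalIntegral.continuousOn_primitive_interval hint
    have hVcont : ContinuousOn (fun t => xd t ⬝ᵥ xd t) (Set.Icc 0 T) :=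
      fun x hx => ((hV x hx.1).continuousAt).continuousWithinAt
    have hWcont : ContinuousOn W (Set.Icc 0 T) :=
      hVcont.sub (continuousOn_const.mul hFcont)
    have hderivW : ∀ x ∈ Set.Ioo (0 : ℝ) T, HasDerivAt W
        (2 * (-(γg x) * (φ x ⬝ᵥ xd x) * (φ x ⬝ᵥ xd x) + (γg x * d x) * (φ x ⬝ᵥ xd x))
          - M ^ 2 * γg x) x := by
      intro x hx
      have hx0 : (0 : ℝ) < x := hx.1
      have hii : IntervalIntegrable γg volume 0 x := by
        refine (hγgint.mono_set ?_).intervalIntegrable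
        rw [Set.uIcc_of_le hx0.le]; exact Set.Icc_subset_Ici_self
      have hca : ContinuousAt γg x :=
        hγgcont.continuousAt (Ici_mem_nhds hx0)
      have hmeas : StronglyMeasurableAtFilter γg (𝓝 x) volume :=
        ⟨Set.Ioi 0, Ioi_mem_nhds hx0,
          (hγgcont.mono (Set.Ioi_subset_Ici_self)).aestronglyMeasurable measurableSet_Ioi⟩
      have hFd : HasDerivAt F (γg x) x :=
        intervalIntegral.integral_hasDerivAt_right hii hmeas hca
      exact (hV x hx0.le).sub ((hFd.const_mul (M ^ 2)))
    have hanti : AntitoneOn W (Set.Icc 0 T) := by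
      apply antitoneOn_of_deriv_nonpos (convex_Icc 0 T) hWcont
      · intro x hx
        rw [interior_Icc] at hx
        exact (hderivW x hx).differentiableAt.differentiableWithinAt
      · intro x hx
        rw [interior_Icc] at hx
        rw [(hderivW x hx).deriv]
        have h1 := hbound x hx.1.le
        have h2 : γg x * |d x| ^ 2 ≤ γg x * M ^ 2 := by
          apply mul_le_mul_of_nonneg_left _ (hγgpos x hx.1.le).le
          exact pow_le_pow_left₀ (abs_nonneg _) (hdM x hx.1.le) 2
        have h3 : -(γg x) * (φ x ⬝ᵥ xd x) ^ 2 ≤ 0 := by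
          have := mul_nonneg (hγgpos x hx.1.le).le (sq_nonneg (φ x ⬝ᵥ xd x))
          linarith
        linarith
    have hWT := hanti (Set.left_mem_Icc.2 hT) (Set.right_mem_Icc.2 hT) hT
    have hF0 : F 0 = 0 := by simp [hF]
    simp only [hW, hF0, mul_zero, sub_zero] at hWT
    linarith
  refine ⟨?_, by simpa [hMdef] using second, third⟩
  -- boundedness
  refine ⟨Real.sqrt (xd 0 ⬝ᵥ xd 0 + M ^ 2 * ∫ s in Set.Ici (0 : ℝ), γg s), fun t ht => ?_⟩
  apply Real.sqrt_le_sqrt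
  refine le_trans (second t ht) ?_
  have h1 : (∫ s in (0 : ℝ)..t, γg s) ≤ ∫ s in Set.Ici (0 : ℝ), γg s := by
    rw [intervalIntegral.integral_of_le ht]
    apply MeasureTheory.setIntegral_mono_set hγgint
    · filter_upwards [MeasureTheory.ae_restrict_mem measurableSet_Ici] with x hx
      exact (hγgpos x hx).le
    · exact Filter.Eventually.of_forall fun x hx => le_of_lt hx.1 |>.trans le_rfl
  nlinarith [sq_nonneg M]
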